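/- For every ordinary Dyck sequence D with max(D) = m, the output φ₁(D) = (E,F,G) is a Type 1 Dyck triple of height m: E is a reverse [1,m] Dyck sequence, F is a Dyck m-skeleton, and G is an affine [0,m−1] Dyck sequence. -/

import Mathlib

/-- A finite integer sequence is an *affine Dyck sequence* if each entry is at
most the previous entry plus 1. -/
def AffineDyck (x : List ℤ) : Prop := List.Chain' (fun a b => b ≤ a + 1) x

/-- A finite integer sequence is a *reverse Dyck sequence* if each entry is at
least the previous entry minus 1. -/
def ReverseDyck (x : List ℤ) : Prop := List.Chain' (fun a b => a - 1 ≤ b) x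

/-- An *ordinary Dyck sequence* is a nonempty affine Dyck sequence starting at
`0` with all entries nonnegative. -/
def OrdDyck (x : List ℤ) : Prop :=
  x ≠ [] ∧ AffineDyck x ∧ x.getD 0 0 = 0 ∧ ∀ a ∈ x, 0 ≤ a

/-- An index `j` of `C` is *eligible* if there is exactly one index `i < j`
with `C i = C j − 1`, and either `j` is the final index or the next entry is
at most `C j`. -/
def Eligible (C : List ℤ) (j : ℕ) : Prop :=
  j < C.length ∧
  ((Finset.range j).filter (fun i => C.getD i 0 = C.getD j 0 - 1)).card = 1 ∧
  (j + 1 = C.length ∨ C.getD (j + 1) 0 ≤ C.getD j 0)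

instance (C : List ℤ) (j : ℕ) : Decidable (Eligible C j) := by
  unfold Eligible; infer_instance

/-- A *Dyck `m`-skeleton*: an ordinary Dyck sequence with maximum `m`, whose
last entry equals `m`, having no eligible index other than possibly the final
one. -/
def DyckSkeleton (m : ℤ) (F : List ℤ) : Prop :=
  OrdDyck F ∧ (∀ a ∈ F, a ≤ m) ∧ F.getLast? = some m ∧
  ∀ j, Eligible F j → j + 1 = F.length

/-- The leftmost eligible index of `C` that is not the final index. -/
def eligNF? (C : List ℤ) : Option ℕ :=
  (List.range C.length).find? (fun j => decide (Eligible C j ∧ j + 1 ≠ C.length))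

/-- The extraction loop: while the current sequence has a nonfinal eligible
index, remove the entry at the leftmost such index and append the removed
value to the output `E`. -/
def extractAux : ℕ → List ℤ → List ℤ → List ℤ × List ℤ
  | 0, E, C => (E, C)
  | fuel + 1, E, C =>
    match eligNF? C with
    | none => (E, C)
    | some j => extractAux fuel (E ++ [C.getD j 0]) (C.eraseIdx j)

/-- The map `φ₁`: split `D` after its last maximum into `C` and `G`, fully
extract nonfinal extractable entries of `C` into `E`, and return the
resulting triple `(E, F, G)`. -/
def phi1 (D : List ℤ) : List ℤ × List ℤ × List ℤ :=
  let m := D.foldr max 0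
  let k := D.length - 1 - D.reverse.findIdx (fun a => decide (a = m))
  let EF := extractAux (k + 1) [] (D.take (k + 1))
  (EF.1, EF.2, D.drop (k + 1))

namespace PhiAux

lemma getD_eraseIdx_lt (C : List ℤ) {i j : ℕ} (h : i < j) :
    (C.eraseIdx j).getD i 0 = C.getD i 0 := by
  rw [List.getD_eq_getElem?_getD, List.getD_eq_getElem?_getD, List.getElem?_eraseIdx,
    if_pos h]

lemma getD_eraseIdx_ge (C : List ℤ) {i j : ℕ} (h : j ≤ i) :
    (C.eraseIdx j).getD i 0 = C.getD (i + 1) 0 := by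
  rw [List.getD_eq_getElem?_getD, List.getD_eq_getElem?_getD, List.getElem?_eraseIdx,
    if_neg (by omega)]

lemma getD_mem {C : List ℤ} {i : ℕ} (h : i < C.length) : C.getD i 0 ∈ C := by
  rw [List.getD_eq_getElem _ _ h]; exact List.getElem_mem h

lemma affine_adj {C : List ℤ} (h : AffineDyck C) {i : ℕ} (hi : i + 1 < C.length) :
    C.getD (i + 1) 0 ≤ C.getD i 0 + 1 := by
  rw [List.getD_eq_getElem _ _ hi, List.getD_eq_getElem _ _ (by omega)]
  have := List.isChain_iff_getElem.mp h i (by omega)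
  simpa using this

lemma ivt {C : List ℤ} (h : AffineDyck C) {a b : ℕ} {w : ℤ} (hab : a ≤ b)
    (hb : b < C.length) (h1 : C.getD a 0 ≤ w) (h2 : w ≤ C.getD b 0) :
    ∃ i, a ≤ i ∧ i ≤ b ∧ C.getD i 0 = w := by
  classical
  set S : Finset ℕ := (Finset.Icc a b).filter (fun i => C.getD i 0 ≤ w) with hS
  have haS : a ∈ S := by
    rw [hS]; exact Finset.mem_filter.mpr ⟨Finset.mem_Icc.mpr ⟨le_rfl, hab⟩, h1⟩
  have hne : S.Nonempty := ⟨a, haS⟩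
  set t := S.max' hne with ht
  have htS : t ∈ S := S.max'_mem hne
  have htIcc : a ≤ t ∧ t ≤ b ∧ C.getD t 0 ≤ w := by
    simp only [hS, Finset.mem_filter, Finset.mem_Icc] at htS; tauto
  rcases eq_or_lt_of_le htIcc.2.1 with heq | hlt
  · exact ⟨t, htIcc.1, htIcc.2.1, le_antisymm htIcc.2.2 (heq ▸ h2)⟩
  · have hnotS : t + 1 ∉ S := fun hmem => by
      have := S.le_max' _ hmem; omega
    have hgt : w < C.getD (t + 1) 0 := by
      by_contra hle
      exact hnotS (by simp only [hS, Finset.mem_filter, Finset.mem_Icc]; omega)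
    have hadj := affine_adj h (i := t) (by omega)
    exact ⟨t, htIcc.1, htIcc.2.1, le_antisymm htIcc.2.2 (by omega)⟩

lemma eligNF_spec {C : List ℤ} {j : ℕ} (h : eligNF? C = some j) :
    Eligible C j ∧ j + 1 ≠ C.length ∧
      ∀ i < j, ¬(Eligible C i ∧ i + 1 ≠ C.length) := by
  rw [eligNF?, List.find?_eq_some_iff_append] at h
  obtain ⟨hpj, as, bs, hsplit, hmin⟩ := h
  have hj : Eligible C j ∧ j + 1 ≠ C.length := by simpa using hpj
  refine ⟨hj.1, hj.2, ?_⟩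
  have hlen : as.length < (List.range C.length).length := by
    rw [hsplit]; simp
  have hjas : j = as.length := by
    have h1 : (List.range C.length)[as.length]? = some j := by
      rw [hsplit, List.getElem?_append_right (le_refl _)]
      simp
    have h2 : as.length < C.length := by simpa using hlen
    rw [List.getElem?_range h2] at h1
    exact (Option.some_injective _ h1).symm
  intro i hi hcon
  have hik : i ∈ as := by
    have : as = List.take as.length (as ++ j :: bs) := by simp
    rw [← hsplit] at this
    rw [this, List.take_range]
    have : i < as.length ⊓ C.length := by
      simp only [List.length_range] at hlen; omega
    simpa [List.mem_range] using this
  have := hmin i hik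
  simp only [Bool.not_eq_true', decide_eq_false_iff_not] at this
  exact this hcon

lemma eligNF_none {C : List ℤ} (h : eligNF? C = none) :
    ∀ j, Eligible C j → j + 1 = C.length := by
  rw [eligNF?, List.find?_eq_none] at h
  intro j hj
  have hjlen : j < C.length := hj.1
  have := h j (by simpa [List.mem_range] using hjlen)
  simp only [decide_eq_true_eq] at this
  by_contra hne
  exact this ⟨hj, hne⟩

lemma card_one {j : ℕ} {P : ℕ → Prop} [DecidablePred P]
    (h : ((Finset.range j).filter P).card = 1) :
    ∃ i₀, i₀ < j ∧ P i₀ ∧ ∀ i < j, P i → i = i₀ := by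
  obtain ⟨i₀, hi₀⟩ := Finset.card_eq_one.mp h
  have hmem : i₀ ∈ (Finset.range j).filter P := hi₀ ▸ Finset.mem_singleton_self i₀
  simp only [Finset.mem_filter, Finset.mem_range] at hmem
  refine ⟨i₀, hmem.1, hmem.2, fun i hi hPi => ?_⟩
  have : i ∈ (Finset.range j).filter P := by
    simp [Finset.mem_filter, Finset.mem_range, hi, hPi]
  rw [hi₀] at this
  simpa using this

lemma eligible_val_pos {C : List ℤ} (hC : OrdDyck C) {j : ℕ} (hj : Eligible C j) :
    1 ≤ C.getD j 0 := by
  obtain ⟨hlt, hcard, _⟩ := hj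
  obtain ⟨i₀, hi₀j, hP, _⟩ := card_one hcard
  have h0 : 0 ≤ C.getD i₀ 0 := hC.2.2.2 _ (getD_mem (by omega))
  omega

lemma leftmost_step {C : List ℤ} (hC : OrdDyck C) {j : ℕ} (hj : Eligible C j)
    (hmin : ∀ i < j, ¬(Eligible C i ∧ i + 1 ≠ C.length)) :
    1 ≤ j ∧ C.getD (j - 1) 0 = C.getD j 0 - 1 := by
  have hv1 : 1 ≤ C.getD j 0 := eligible_val_pos hC hj
  obtain ⟨hne, haff, hhead, hnn⟩ := hC
  obtain ⟨hjlen, hcard, hdisj⟩ := hj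
  set v := C.getD j 0 with hv
  obtain ⟨i₀, hi₀j, hPi₀, huniq⟩ := card_one hcard
  by_cases hcase : i₀ = j - 1
  · refine ⟨by omega, ?_⟩
    rw [← hcase]; exact hPi₀
  exfalso
  have hi₀j1 : i₀ + 1 < j := by omega
  -- (a) entries strictly between i₀ and j are ≥ v
  have ha : ∀ s, i₀ < s → s < j → v ≤ C.getD s 0 := by
    intro s hs1 hs2
    by_contra hlt
    push_neg at hlt
    obtain ⟨i, his, hij, hiv⟩ :=
      ivt haff (a := s) (b := j) (w := v - 1) (by omega) hjlen (by omega)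
        (by rw [← hv]; omega)
    have hij' : i < j := by
      rcases eq_or_lt_of_le hij with h | h
      · exfalso; rw [h, ← hv] at hiv; omega
      · exact h
    have := huniq i hij' hiv
    omega
  -- (b) entries at or before i₀ are ≤ v - 1
  have hb : ∀ s, s ≤ i₀ → C.getD s 0 ≤ v - 1 := by
    intro s hs
    by_contra hlt
    push_neg at hlt
    obtain ⟨i, his, hij, hiv⟩ :=
      ivt haff (a := 0) (b := s) (w := v - 1) (by omega) (by omega)
        (by rw [hhead]; omega) (by omega)
    have hii₀ := huniq i (by omega) hiv
    have : s = i₀ := by omega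
    rw [this] at hlt
    omega
  classical
  set T : Finset ℕ := (Finset.Ioo i₀ j).filter
      (fun s => C.getD (s + 1) 0 ≤ C.getD s 0) with hT
  have hjm1T : j - 1 ∈ T := by
    rw [hT]
    refine Finset.mem_filter.mpr ⟨Finset.mem_Ioo.mpr ⟨by omega, by omega⟩, ?_⟩
    have h1 : j - 1 + 1 = j := by omega
    rw [h1, ← hv]
    exact ha (j - 1) (by omega) (by omega)
  have hTne : T.Nonempty := ⟨_, hjm1T⟩
  set r := T.min' hTne with hr
  have hrT : r ∈ T := T.min'_mem hTne
  have hrprop : i₀ < r ∧ r < j ∧ C.getD (r + 1) 0 ≤ C.getD r 0 := by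
    rw [hT] at hrT; simp only [Finset.mem_filter, Finset.mem_Ioo] at hrT; tauto
  have hrmin : ∀ s, i₀ < s → s < r → C.getD (s + 1) 0 = C.getD s 0 + 1 := by
    intro s h1 h2
    have hnotT : s ∉ T := fun hmem => by have := T.min'_le _ hmem; omega
    have hngt : ¬ (C.getD (s + 1) 0 ≤ C.getD s 0) := by
      intro hle
      exact hnotT (by
        rw [hT]
        exact Finset.mem_filter.mpr ⟨Finset.mem_Ioo.mpr ⟨h1, by omega⟩, hle⟩)
    have hadj := affine_adj haff (i := s) (by omega)
    omega
  have hstair : ∀ t, i₀ + 1 + t ≤ r → C.getD (i₀ + 1 + t) 0 = v + t := by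
    intro t
    induction t with
    | zero =>
      intro _
      have hle : C.getD (i₀ + 1) 0 ≤ v := by
        have := affine_adj haff (i := i₀) (by omega)
        omega
      have hge : v ≤ C.getD (i₀ + 1) 0 := ha _ (by omega) (by omega)
      have : C.getD (i₀ + 1) 0 = v := le_antisymm hle hge
      simpa using this
    | succ t ih =>
      intro hle
      have h1 := ih (by omega)
      have h2 := hrmin (i₀ + 1 + t) (by omega) (by omega)
      have h3 : i₀ + 1 + (t + 1) = (i₀ + 1 + t) + 1 := by omega
      rw [h3, h2, h1]
      push_cast; ring
  set t₀ := r - i₀ - 1 with ht₀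
  have hrt₀ : r = i₀ + 1 + t₀ := by omega
  have hu : C.getD r 0 = v + t₀ := by rw [hrt₀]; exact hstair t₀ (by omega)
  have hcardr :
      ((Finset.range r).filter (fun i => C.getD i 0 = C.getD r 0 - 1)).card = 1 := by
    rcases Nat.eq_zero_or_pos t₀ with h0 | hpos
    · -- r = i₀ + 1, value v; the unique prior v-1 is i₀
      apply Finset.card_eq_one.mpr ⟨i₀, ?_⟩
      ext i
      simp only [Finset.mem_filter, Finset.mem_range, Finset.mem_singleton]
      constructor
      · rintro ⟨hil, hieq⟩
        rw [hu] at hieq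
        exact huniq i (by omega) (by push_cast [h0] at hieq; omega)
      · rintro rfl
        refine ⟨by omega, ?_⟩
        rw [hu, h0]
        push_cast
        omega
    · -- r > i₀ + 1, value v + t₀; the unique prior (v+t₀-1) is r-1
      apply Finset.card_eq_one.mpr ⟨r - 1, ?_⟩
      ext i
      simp only [Finset.mem_filter, Finset.mem_range, Finset.mem_singleton]
      constructor
      · rintro ⟨hil, hieq⟩
        rw [hu] at hieq
        by_cases hii₀ : i ≤ i₀
        · have := hb i hii₀; omega
        · push_neg at hii₀
          have hit : i = i₀ + 1 + (i - i₀ - 1) := by omega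
          have := hstair (i - i₀ - 1) (by omega)
          rw [← hit] at this
          rw [this] at hieq
          omega
      · rintro rfl
        refine ⟨by omega, ?_⟩
        have h1 : r - 1 = i₀ + 1 + (t₀ - 1) := by omega
        have := hstair (t₀ - 1) (by omega)
        rw [← h1] at this
        rw [this, hu]
        push_cast
        omega
  have heligr : Eligible C r := ⟨by omega, hcardr, Or.inr hrprop.2.2⟩
  exact hmin r (by omega) ⟨heligr, by omega⟩

def Good (m : ℤ) (C : List ℤ) : Prop :=
  OrdDyck C ∧ (∀ a ∈ C, a ≤ m) ∧ C.getLast? = some m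

lemma affine_of_adj {C : List ℤ}
    (h : ∀ i, i + 1 < C.length → C.getD (i + 1) 0 ≤ C.getD i 0 + 1) : AffineDyck C := by
  rw [AffineDyck]; unfold List.Chain'; rw [List.isChain_iff_getElem]
  intro i hi
  have := h i (by omega)
  rw [List.getD_eq_getElem _ _ (by omega), List.getD_eq_getElem _ _ (by omega)] at this
  simpa using this

lemma good_erase {m : ℤ} {C : List ℤ} {j : ℕ} (hG : Good m C) (h : eligNF? C = some j) :
    Good m (C.eraseIdx j) := by
  obtain ⟨hej, hnfj, hminj⟩ := eligNF_spec h
  obtain ⟨hj1, hjm1⟩ := leftmost_step hG.1 hej hminj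
  have hjlen : j < C.length := hej.1
  have hlen2 : j + 1 < C.length := by omega
  have hlen' : (C.eraseIdx j).length = C.length - 1 := by
    rw [List.length_eraseIdx, if_pos hjlen]
  have hnext : C.getD (j + 1) 0 ≤ C.getD j 0 := by
    rcases hej.2.2 with h1 | h1
    · omega
    · exact h1
  refine ⟨⟨List.ne_nil_of_length_pos (by omega), ?_, ?_, ?_⟩, ?_, ?_⟩
  · -- affine
    apply affine_of_adj
    intro i hi
    rw [hlen'] at hi
    rcases lt_trichotomy (i + 1) j with hc | hc | hc
    · rw [getD_eraseIdx_lt (i := i + 1) C hc, getD_eraseIdx_lt (i := i) C (by omega)]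
      exact affine_adj hG.1.2.1 (by omega)
    · subst hc
      rw [getD_eraseIdx_ge (i := i + 1) C (by omega),
        getD_eraseIdx_lt (i := i) C (by omega)]
      have e : i + 1 - 1 = i := by omega
      rw [e] at hjm1
      omega
    · rw [getD_eraseIdx_ge (i := i + 1) C (by omega),
        getD_eraseIdx_ge (i := i) C (by omega)]
      exact affine_adj hG.1.2.1 (by omega)
  · rw [getD_eraseIdx_lt _ (by omega)]
    exact hG.1.2.2.1
  · intro a ha
    exact hG.1.2.2.2 a (List.Sublist.mem ha (List.eraseIdx_sublist _ _))
  · intro a ha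
    exact hG.2.1 a (List.Sublist.mem ha (List.eraseIdx_sublist _ _))
  · rw [List.getLast?_eq_getElem?, hlen', List.getElem?_eraseIdx, if_neg (by omega)]
    have e1 : C.length - 1 - 1 + 1 = C.length - 1 := by omega
    rw [e1, ← List.getLast?_eq_getElem?]
    exact hG.2.2

lemma elig_bounds {m : ℤ} {C : List ℤ} {j : ℕ} (hG : Good m C) (h : Eligible C j) :
    1 ≤ C.getD j 0 ∧ C.getD j 0 ≤ m :=
  ⟨eligible_val_pos hG.1 h, hG.2.1 _ (getD_mem h.1)⟩

lemma next_val {m : ℤ} {C : List ℤ} {j q : ℕ} (hG : Good m C)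
    (hj : eligNF? C = some j) (hq : eligNF? (C.eraseIdx j) = some q) :
    C.getD j 0 - 1 ≤ (C.eraseIdx j).getD q 0 := by
  obtain ⟨hej, hnfj, hminj⟩ := eligNF_spec hj
  obtain ⟨heq, hnfq, hminq⟩ := eligNF_spec hq
  have hG' := good_erase hG hj
  obtain ⟨hj1, hjm1⟩ := leftmost_step hG.1 hej hminj
  have hjlen : j < C.length := hej.1
  have hlen2 : j + 1 < C.length := by omega
  have hlen' : (C.eraseIdx j).length = C.length - 1 := by
    rw [List.length_eraseIdx, if_pos hjlen]
  have hqlen : q < (C.eraseIdx j).length := heq.1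
  rcases lt_trichotomy q (j - 1) with hlt | heqq | hgt
  · -- q < j - 1 : q would be eligible in C before j, contradiction
    exfalso
    apply hminj q (by omega)
    obtain ⟨hq1, hq2, hq3⟩ := heq
    constructor
    · refine ⟨by omega, ?_, ?_⟩
      · have hfeq : (Finset.range q).filter (fun i => C.getD i 0 = C.getD q 0 - 1)
            = (Finset.range q).filter
              (fun i => (C.eraseIdx j).getD i 0 = (C.eraseIdx j).getD q 0 - 1) := by
          apply Finset.filter_congr
          intro x hx
          rw [Finset.mem_range] at hx
          rw [getD_eraseIdx_lt (i := x) C (by omega),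
            getD_eraseIdx_lt (i := q) C (by omega)]
        rw [hfeq]
        exact hq2
      · rcases hq3 with h1 | h1
        · exact absurd h1 hnfq
        · rw [getD_eraseIdx_lt (i := q + 1) C (by omega),
            getD_eraseIdx_lt (i := q) C (by omega)] at h1
          exact Or.inr h1
    · omega
  · -- q = j - 1 : value is exactly v - 1
    rw [getD_eraseIdx_lt (i := q) C (by omega), heqq]
    omega
  · -- q ≥ j
    by_contra hcon
    push_neg at hcon
    have hv'1 : 1 ≤ (C.eraseIdx j).getD q 0 := eligible_val_pos hG'.1 heq
    obtain ⟨hq1, hqm1⟩ := leftmost_step hG'.1 heq hminq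
    obtain ⟨i₀, hi₀, hPi₀, huniq⟩ := card_one heq.2.1
    have hjm1' : (C.eraseIdx j).getD (j - 1) 0 = C.getD j 0 - 1 := by
      rw [getD_eraseIdx_lt _ (by omega)]; exact hjm1
    obtain ⟨i, hi0, hij, hiv⟩ := ivt hG'.1.2.1 (a := 0) (b := j - 1)
      (w := (C.eraseIdx j).getD q 0 - 1) (by omega) (by omega)
      (by rw [hG'.1.2.2.1]; omega) (by rw [hjm1']; omega)
    have hne2 : i ≠ q - 1 := by
      intro hcontra
      have hi' : i = j - 1 := by omega
      rw [hi', hjm1'] at hiv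
      omega
    have h1 := huniq i (by omega) hiv
    have h2 := huniq (q - 1) (by omega) hqm1
    omega

lemma extract_spec (m : ℤ) : ∀ (fuel : ℕ) (E C : List ℤ), Good m C →
    C.length ≤ fuel + 1 →
    ReverseDyck E → (∀ a ∈ E, 1 ≤ a ∧ a ≤ m) →
    (∀ e q, E.getLast? = some e → eligNF? C = some q → e - 1 ≤ C.getD q 0) →
    ReverseDyck (extractAux fuel E C).1 ∧
    (∀ a ∈ (extractAux fuel E C).1, 1 ≤ a ∧ a ≤ m) ∧
    Good m (extractAux fuel E C).2 ∧
    ∀ j, Eligible (extractAux fuel E C).2 j → j + 1 = (extractAux fuel E C).2.length := by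
  intro fuel
  induction fuel with
  | zero =>
    intro E C hG hlen hE hEb hlink
    refine ⟨hE, hEb, hG, fun j hj => ?_⟩
    simp only [extractAux] at *
    have h1 : j < C.length := hj.1
    have h2 : C ≠ [] := hG.1.1
    have h3 : 0 < C.length := List.length_pos_iff.mpr h2
    omega
  | succ fuel ih =>
    intro E C hG hlen hE hEb hlink
    rcases hopt : eligNF? C with _ | j
    · simp only [extractAux, hopt]
      refine ⟨hE, hEb, hG, eligNF_none hopt⟩
    · simp only [extractAux, hopt]
      obtain ⟨hej, hnfj, hminj⟩ := eligNF_spec hopt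
      have hb := elig_bounds hG hej
      have hlen' : (C.eraseIdx j).length = C.length - 1 := by
        rw [List.length_eraseIdx, if_pos hej.1]
      apply ih
      · exact good_erase hG hopt
      · omega
      · rw [ReverseDyck]; unfold List.Chain'; rw [List.isChain_append]
        refine ⟨hE, List.isChain_singleton _, ?_⟩
        intro x hx y hy
        simp only [List.head?_cons, Option.mem_def, Option.some.injEq] at hy
        subst hy
        exact hlink x j (Option.mem_def.mp hx) hopt
      · intro a ha
        rcases List.mem_append.mp ha with h1 | h1
        · exact hEb a h1
        · simp only [List.mem_singleton] at h1
          subst h1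
          exact hb
      · intro e q he hq
        rw [List.getLast?_concat] at he
        have he' := Option.some_injective _ he
        subst he'
        exact next_val hG hopt hq

lemma foldr_max_le {l : List ℤ} {m : ℤ} (hm : 0 ≤ m) (hmax : ∀ a ∈ l, a ≤ m) :
    l.foldr max 0 ≤ m := by
  induction l with
  | nil => simpa using hm
  | cons a t ih =>
    simp only [List.foldr_cons, max_le_iff]
    exact ⟨hmax a (by simp), ih fun b hb => hmax b (by simp [hb])⟩

lemma le_foldr_max {l : List ℤ} {m : ℤ} (hmem : m ∈ l) : m ≤ l.foldr max 0 := by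
  induction l with
  | nil => simp at hmem
  | cons a t ih =>
    simp only [List.foldr_cons, le_max_iff]
    rcases List.mem_cons.mp hmem with rfl | h
    · exact Or.inl le_rfl
    · exact Or.inr (ih h)

lemma foldr_max_eq {l : List ℤ} {m : ℤ} (hm : 0 ≤ m) (hmem : m ∈ l)
    (hmax : ∀ a ∈ l, a ≤ m) : l.foldr max 0 = m :=
  le_antisymm (foldr_max_le hm hmax) (le_foldr_max hmem)

end PhiAux

open PhiAux in
theorem phi1_well_defined (D : List ℤ) (m : ℤ) (hD : OrdDyck D)
    (hmem : m ∈ D) (hmax : ∀ a ∈ D, a ≤ m) :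
    ReverseDyck (phi1 D).1 ∧ (∀ a ∈ (phi1 D).1, 1 ≤ a ∧ a ≤ m) ∧
    DyckSkeleton m (phi1 D).2.1 ∧
    AffineDyck (phi1 D).2.2 ∧ (∀ a ∈ (phi1 D).2.2, 0 ≤ a ∧ a ≤ m - 1) := by
  classical
  obtain ⟨hne, haff, hhead, hnn⟩ := hD
  have hlen0 : 0 < D.length := List.length_pos_iff.mpr hne
  have hm0 : 0 ≤ m := by
    have h0 : (0:ℤ) ∈ D := by rw [← hhead]; exact getD_mem hlen0
    exact hmax 0 h0
  have hfold : D.foldr max 0 = m := foldr_max_eq hm0 hmem hmax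
  simp only [phi1]
  rw [hfold]
  set fi := D.reverse.findIdx (fun a => decide (a = m)) with hfi
  have hfilt : fi < D.reverse.length :=
    List.findIdx_lt_length_of_exists ⟨m, List.mem_reverse.mpr hmem, by simp⟩
  have hfilen : fi < D.length := by simpa using hfilt
  set k := D.length - 1 - fi with hk
  have hkl : k < D.length := by omega
  have hkm : D.getD k 0 = m := by
    have h1 : D.reverse[fi]'hfilt = D[k]'hkl := List.getElem_reverse _
    have h2 := List.findIdx_getElem (p := fun a => decide (a = m)) (xs := D.reverse)
      (w := hfilt)
    simp only [decide_eq_true_eq] at h2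
    rw [List.getD_eq_getElem _ _ hkl, ← h1]
    exact h2
  have hafter : ∀ i, k < i → i < D.length → D.getD i 0 ≠ m := by
    intro i hki hil
    have hi2 : D.length - 1 - i < fi := by omega
    have h3 := List.not_of_lt_findIdx (xs := D.reverse)
      (p := fun a => decide (a = m)) hi2
    simp only [decide_eq_false_iff_not] at h3
    have h4 : D.reverse[D.length - 1 - i]'(by simp; omega)
        = D[D.length - 1 - (D.length - 1 - i)]'(by omega) := List.getElem_reverse _
    have h5 : D.length - 1 - (D.length - 1 - i) = i := by omega
    rw [List.getD_eq_getElem _ _ hil]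
    intro hcon
    apply h3
    rw [h4]
    simp only [h5]
    exact hcon
  have hk1 : k + 1 ≤ D.length := by omega
  have hC₀len : (D.take (k + 1)).length = k + 1 := by
    rw [List.length_take]; omega
  have hgetD_take : ∀ i, i ≤ k → (D.take (k + 1)).getD i 0 = D.getD i 0 := by
    intro i hi
    rw [List.getD_eq_getElem (D.take (k + 1)) 0 (show i < (D.take (k+1)).length by omega),
      List.getD_eq_getElem D 0 (show i < D.length by omega)]
    exact List.getElem_take
  have hGood : Good m (D.take (k + 1)) := by
    refine ⟨⟨List.ne_nil_of_length_pos (by omega), List.IsChain.take haff _, ?_, ?_⟩, ?_, ?_⟩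
    · rw [hgetD_take 0 (by omega)]; exact hhead
    · intro a ha; exact hnn a (List.take_subset _ _ ha)
    · intro a ha; exact hmax a (List.take_subset _ _ ha)
    · rw [List.getLast?_eq_getElem?, hC₀len]
      simp only [Nat.add_sub_cancel]
      rw [List.getElem?_eq_getElem (by omega)]
      have h6 : (D.take (k + 1))[k]'(by omega) = D[k]'hkl := List.getElem_take
      rw [h6, ← List.getD_eq_getElem D 0 hkl, hkm]
  have hspec := extract_spec m (k + 1) [] (D.take (k + 1)) hGood (by omega)
    List.isChain_nil (by simp) (by intro e q he; simp at he)
  refine ⟨hspec.1, hspec.2.1, ⟨hspec.2.2.1.1, hspec.2.2.1.2.1, hspec.2.2.1.2.2, hspec.2.2.2⟩, ?_, ?_⟩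
  · exact List.IsChain.drop haff _
  · intro a ha
    obtain ⟨i, hi, rfl⟩ := List.mem_iff_getElem.mp ha
    have hilen : k + 1 + i < D.length := by
      rw [List.length_drop] at hi; omega
    have heq : (D.drop (k + 1))[i]'hi = D[k + 1 + i]'hilen := List.getElem_drop
    rw [heq]
    have hmem' : D[k + 1 + i]'hilen ∈ D := List.getElem_mem hilen
    have h1 := hnn _ hmem'
    have h2 := hmax _ hmem'
    have h3 := hafter (k + 1 + i) (by omega) hilen
    rw [List.getD_eq_getElem _ _ hilen] at h3
    constructor
    · exact h1
    · omega
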